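/- Let G be a cubic graph and M1, M2 disjoint matchings with |M1 ∪ M2| maximum. If a component of G − M1 − M2 is a star K_{1,3}, then no edge of M1 ∪ M2 joins a leaf of this star to an internal (degree-2) vertex of a path component P4 of G − M1 − M2. -/

import Mathlib

open SimpleGraph

/-- A matching in `G` given as a set of edges: edges of `G`, pairwise vertex-disjoint. -/
def IsMatchingSet {V : Type*} (G : SimpleGraph V) (M : Set (Sym2 V)) : Prop :=
  M ⊆ G.edgeSet ∧ ∀ e ∈ M, ∀ f ∈ M, e ≠ f → ∀ v, v ∈ e → v ∉ f

/-- `M1, M2` are disjoint matchings of `G` with `|M1 ∪ M2|` maximum over all pairs of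
disjoint matchings of `G`. -/
def MaxDisjointPair {V : Type*} (G : SimpleGraph V) (M1 M2 : Set (Sym2 V)) : Prop :=
  IsMatchingSet G M1 ∧ IsMatchingSet G M2 ∧ Disjoint M1 M2 ∧
  ∀ N1 N2 : Set (Sym2 V), IsMatchingSet G N1 → IsMatchingSet G N2 → Disjoint N1 N2 →
    (N1 ∪ N2).ncard ≤ (M1 ∪ M2).ncard

/-- Adjacency in `Ĝ = G − M1 − M2`: adjacency via an edge of `G` not in `M1 ∪ M2`. -/
def hatAdj {V : Type*} (G : SimpleGraph V) (M1 M2 : Set (Sym2 V)) (x y : V) : Prop :=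
  G.Adj x y ∧ s(x, y) ∉ M1 ∪ M2

/-- The vertices `u, l 0, l 1, l 2` form a `K_{1,3}` connected component of
`Ĝ = G − M1 − M2`, with center `u` and leaves `l i`. -/
def IsK13Component {V : Type*} (G : SimpleGraph V) (M1 M2 : Set (Sym2 V))
    (u : V) (l : Fin 3 → V) : Prop :=
  Function.Injective l ∧ (∀ i, l i ≠ u) ∧ (∀ i, hatAdj G M1 M2 u (l i)) ∧
  (∀ w, hatAdj G M1 M2 u w → ∃ i, w = l i) ∧
  (∀ i w, hatAdj G M1 M2 (l i) w → w = u)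

/-- The vertices `u1 u2 u3 u4` form a path (`P4`) connected component of
`Ĝ = G − M1 − M2`. -/
def IsP4Component {V : Type*} (G : SimpleGraph V) (M1 M2 : Set (Sym2 V))
    (u1 u2 u3 u4 : V) : Prop :=
  u1 ≠ u2 ∧ u1 ≠ u3 ∧ u1 ≠ u4 ∧ u2 ≠ u3 ∧ u2 ≠ u4 ∧ u3 ≠ u4 ∧
  hatAdj G M1 M2 u1 u2 ∧ hatAdj G M1 M2 u2 u3 ∧ hatAdj G M1 M2 u3 u4 ∧
  (∀ w, hatAdj G M1 M2 u1 w → w = u2) ∧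
  (∀ w, hatAdj G M1 M2 u2 w → w = u1 ∨ w = u3) ∧
  (∀ w, hatAdj G M1 M2 u3 w → w = u2 ∨ w = u4) ∧
  (∀ w, hatAdj G M1 M2 u4 w → w = u3)


section Aux

variable {V : Type*} [Fintype V] (G : SimpleGraph V) [DecidableRel G.Adj]

lemma hatAdj_symm {M1 M2 : Set (Sym2 V)} {x y : V} (h : hatAdj G M1 M2 x y) :
    hatAdj G M1 M2 y x := ⟨h.1.symm, by rw [Sym2.eq_swap]; exact h.2⟩

lemma hatAdj_comm {M1 M2 : Set (Sym2 V)} {x y : V} (h : hatAdj G M1 M2 x y) :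
    hatAdj G M2 M1 x y := ⟨h.1, by rw [Set.union_comm]; exact h.2⟩

lemma neighbors_eq {v a b c : V} (hdeg : G.degree v = 3) (hab : a ≠ b) (hac : a ≠ c)
    (hbc : b ≠ c) (ha : G.Adj v a) (hb : G.Adj v b) (hc : G.Adj v c) :
    ∀ w, G.Adj v w → w = a ∨ w = b ∨ w = c := by
  classical
  intro w hw
  have hsub : ({a, b, c} : Finset V) ⊆ G.neighborFinset v := by
    intro x hx
    simp only [Finset.mem_insert, Finset.mem_singleton] at hx
    rcases hx with rfl | rfl | rfl <;> simpa [SimpleGraph.mem_neighborFinset]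
  have hcard : ({a, b, c} : Finset V).card = 3 := by
    rw [Finset.card_insert_of_notMem (by simp [hab, hac]),
      Finset.card_insert_of_notMem (by simp [hbc]), Finset.card_singleton]
  have heq : ({a, b, c} : Finset V) = G.neighborFinset v := by
    apply Finset.eq_of_subset_of_card_le hsub
    rw [hcard]
    rw [← SimpleGraph.card_neighborFinset_eq_degree] at hdeg
    omega
  have : w ∈ G.neighborFinset v := (SimpleGraph.mem_neighborFinset G v w).mpr hw
  rw [← heq] at this
  simpa using this

set_option maxHeartbeats 1000000 in
/-- The key swap lemma: a contradiction from an edge of `A` joining the leaf `l` of a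
`K₁,₃`-like configuration to the vertex `u2` of a path configuration. -/
lemma key (hcubic : ∀ v : V, G.degree v = 3) (A B : Set (Sym2 V))
    (hA : IsMatchingSet G A) (hB : IsMatchingSet G B) (hd : Disjoint A B)
    (hmax : ∀ N1 N2 : Set (Sym2 V), IsMatchingSet G N1 → IsMatchingSet G N2 →
      Disjoint N1 N2 → (N1 ∪ N2).ncard ≤ (A ∪ B).ncard)
    (u l u1 u2 u3 u4 : V)
    (hul : hatAdj G A B u l)
    (hufree : ∀ e ∈ A ∪ B, u ∉ e)
    (h12 : hatAdj G A B u1 u2) (h23 : hatAdj G A B u2 u3) (h34 : hatAdj G A B u3 u4)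
    (hlu1 : l ≠ u1) (hlu3 : l ≠ u3) (hu13 : u1 ≠ u3) (hu24 : u2 ≠ u4)
    (huu2 : u ≠ u2) (huu3 : u ≠ u3)
    (he0 : s(l, u2) ∈ A) : False := by
  obtain ⟨hAe, hAm⟩ := hA
  obtain ⟨hBe, hBm⟩ := hB
  set S : Set (Sym2 V) := A ∪ B with hS
  have hSfin : S.Finite := Set.toFinite _
  have hGlu2 : G.Adj l u2 := (G.mem_edgeSet).mp (hAe he0)
  have hlu2 : l ≠ u2 := hGlu2.ne
  have he0S : s(l, u2) ∈ S := Or.inl he0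
  have he0B : s(l, u2) ∉ B := Set.disjoint_left.mp hd he0
  -- every edge of S through u2 is e0
  have hu2edge : ∀ e ∈ S, u2 ∈ e → e = s(l, u2) := by
    intro e he hu2e
    have heE : e ∈ G.edgeSet := by
      rcases he with h | h
      · exact hAe h
      · exact hBe h
    obtain ⟨w, rfl⟩ := Sym2.mem_iff_exists.mp hu2e
    have hadj : G.Adj u2 w := (G.mem_edgeSet).mp heE
    rcases neighbors_eq G (hcubic u2) hu13 hlu1.symm hlu3.symm h12.1.symm h23.1
        hGlu2.symm w hadj with rfl | rfl | rfl
    · exact absurd he (by rw [Sym2.eq_swap]; exact h12.2)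
    · exact absurd he h23.2
    · rw [Sym2.eq_swap]
  -- u2 is uncovered by B
  have hu2B : ∀ e ∈ B, u2 ∉ e := by
    intro e heB hu2e
    exact he0B ((hu2edge e (Or.inr heB) hu2e) ▸ heB)
  -- u3 cannot be covered by both A and B
  have hu3nb : ¬ ((∃ f ∈ A, u3 ∈ f) ∧ (∃ g ∈ B, u3 ∈ g)) := by
    rintro ⟨⟨f, hfA, hf3⟩, ⟨g, hgB, hg3⟩⟩
    obtain ⟨x, rfl⟩ := Sym2.mem_iff_exists.mp hf3
    obtain ⟨y, rfl⟩ := Sym2.mem_iff_exists.mp hg3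
    have hfx : G.Adj u3 x := (G.mem_edgeSet).mp (hAe hfA)
    have hgy : G.Adj u3 y := (G.mem_edgeSet).mp (hBe hgB)
    have hxu2 : x ≠ u2 := by
      rintro rfl
      exact h23.2 (by rw [Sym2.eq_swap]; exact Or.inl hfA)
    have hxu4 : x ≠ u4 := by
      rintro rfl
      exact h34.2 (Or.inl hfA)
    rcases neighbors_eq G (hcubic u3) hu24 (Ne.symm hxu2) (Ne.symm hxu4) h23.1.symm
        h34.1 hfx y hgy with rfl | rfl | rfl
    · exact h23.2 (by rw [Sym2.eq_swap]; exact Or.inr hgB)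
    · exact h34.2 (Or.inr hgB)
    · exact Set.disjoint_left.mp hd hfA hgB
  have hle0 : l ∈ s(l, u2) := Sym2.mem_iff.mpr (Or.inl rfl)
  set a : Sym2 V := s(u, l) with ha
  set b : Sym2 V := s(u2, u3) with hb
  have haE : a ∈ G.edgeSet := (G.mem_edgeSet).mpr hul.1
  have hbE : b ∈ G.edgeSet := (G.mem_edgeSet).mpr h23.1
  have haS : a ∉ S := hul.2
  have hbS : b ∉ S := h23.2
  have hab : a ≠ b := by
    intro h
    have : u ∈ b := h ▸ Sym2.mem_iff.mpr (Or.inl rfl)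
    rcases Sym2.mem_iff.mp this with rfl | rfl
    · exact huu2 rfl
    · exact huu3 rfl
  -- the modified matching M1'
  set M1' : Set (Sym2 V) := insert a (A \ {s(l, u2)}) with hM1'def
  have hM1' : IsMatchingSet G M1' := by
    constructor
    · rintro e (rfl | ⟨heA, -⟩)
      · exact haE
      · exact hAe heA
    · rintro e (rfl | ⟨heA, hee0⟩) f hf hef v hv hvf
      · rcases hf with rfl | ⟨hfA, hfe0⟩
        · exact hef rfl
        · rcases Sym2.mem_iff.mp hv with rfl | rfl
          · exact hufree f (Or.inl hfA) hvf
          · exact hAm _ he0 f hfA (fun h => hfe0 (Set.mem_singleton_iff.mpr h.symm)) v hle0 hvf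
      · rcases hf with rfl | ⟨hfA, hfe0⟩
        · rcases Sym2.mem_iff.mp hvf with rfl | rfl
          · exact hufree e (Or.inl heA) hv
          · exact hAm _ he0 e heA (fun h => hee0 (Set.mem_singleton_iff.mpr h.symm)) v hle0 hv
        · exact hAm e heA f hfA hef v hv hvf
  have hM1'B : Disjoint M1' B := by
    rw [Set.disjoint_left]
    rintro e (rfl | ⟨heA, -⟩)
    · exact fun h => haS (Or.inr h)
    · exact Set.disjoint_left.mp hd heA
  -- vertices of a and b are distinct across
  have hunotb : u ∉ b := by
    intro h
    rcases Sym2.mem_iff.mp h with rfl | rfl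
    · exact huu2 rfl
    · exact huu3 rfl
  have hlnotb : l ∉ b := by
    intro h
    rcases Sym2.mem_iff.mp h with rfl | rfl
    · exact hlu2 rfl
    · exact hlu3 rfl
  -- the target set and final contradiction machinery
  have hfinal : ∀ N1 N2 : Set (Sym2 V), IsMatchingSet G N1 → IsMatchingSet G N2 →
      Disjoint N1 N2 → N1 ∪ N2 = insert b (insert a (S \ {s(l, u2)})) → False := by
    intro N1 N2 h1 h2 hdis heq
    have hle := hmax N1 N2 h1 h2 hdis
    rw [heq] at hle
    have h1' : a ∉ S \ {s(l, u2)} := fun h => haS h.1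
    have h2' : b ∉ insert a (S \ {s(l, u2)}) := by
      rintro (h | h)
      · exact hab h.symm
      · exact hbS h.1
    rw [Set.ncard_insert_of_notMem h2' (Set.Finite.insert _ hSfin.diff),
      Set.ncard_insert_of_notMem h1' hSfin.diff] at hle
    have := Set.ncard_diff_singleton_add_one he0S hSfin
    omega
  have hsplit : A \ {s(l, u2)} ∪ B = S \ {s(l, u2)} := by
    rw [hS, Set.union_diff_distrib, Set.diff_singleton_eq_self he0B]
  by_cases hc : ∃ f ∈ A, u3 ∈ f
  · -- u3 covered by A, hence free in B: add b to B
    obtain ⟨f, hfA, hf3⟩ := hc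
    have hu3B : ∀ g ∈ B, u3 ∉ g := by
      intro g hgB hg3
      exact hu3nb ⟨⟨f, hfA, hf3⟩, ⟨g, hgB, hg3⟩⟩
    have hbnB : ∀ g ∈ B, ∀ v, v ∈ b → v ∉ g := by
      intro g hgB v hv hvg
      rcases Sym2.mem_iff.mp hv with rfl | rfl
      · exact hu2B g hgB hvg
      · exact hu3B g hgB hvg
    have hN2 : IsMatchingSet G (insert b B) := by
      constructor
      · rintro e (rfl | heB)
        · exact hbE
        · exact hBe heB
      · rintro e (rfl | heB) g (rfl | hgB) heg v hv hvg
        · exact heg rfl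
        · exact hbnB g hgB v hv hvg
        · exact hbnB e heB v hvg hv
        · exact hBm e heB g hgB heg v hv hvg
    have hdis : Disjoint M1' (insert b B) := by
      rw [Set.disjoint_left]
      rintro e (rfl | ⟨heA, -⟩) h
      · rcases h with h | h
        · exact hab h
        · exact haS (Or.inr h)
      · rcases h with h | h
        · exact hbS (Or.inl (h ▸ heA))
        · exact Set.disjoint_left.mp hd heA h
    apply hfinal M1' (insert b B) hM1' hN2 hdis
    rw [hM1'def, ← hsplit]
    ext e
    simp only [Set.mem_union, Set.mem_insert_iff]
    tauto
  · -- u3 free in A (and in M1'): add b to M1'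
    push_neg at hc
    have hbnM1' : ∀ f ∈ M1', ∀ v, v ∈ b → v ∉ f := by
      rintro f hf v hv hvf
      rcases Sym2.mem_iff.mp hv with rfl | rfl
      · rcases hf with rfl | ⟨hfA, hfe0⟩
        · rcases Sym2.mem_iff.mp hvf with rfl | rfl
          · exact huu2 rfl
          · exact hlu2 rfl
        · exact hfe0 (Set.mem_singleton_iff.mpr (hu2edge f (Or.inl hfA) hvf))
      · rcases hf with rfl | ⟨hfA, hfe0⟩
        · rcases Sym2.mem_iff.mp hvf with rfl | rfl
          · exact huu3 rfl
          · exact hlu3 rfl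
        · exact hc f hfA hvf
    have hN1 : IsMatchingSet G (insert b M1') := by
      constructor
      · rintro e (rfl | he)
        · exact hbE
        · exact hM1'.1 he
      · rintro e (rfl | he) f (rfl | hf) hef v hv hvf
        · exact hef rfl
        · exact hbnM1' f hf v hv hvf
        · exact hbnM1' e he v hvf hv
        · exact hM1'.2 e he f hf hef v hv hvf
    have hdis : Disjoint (insert b M1') B := by
      rw [Set.disjoint_left]
      rintro e (rfl | he)
      · exact fun h => hbS (Or.inr h)
      · exact Set.disjoint_left.mp hM1'B he
    apply hfinal (insert b M1') B hN1 ⟨hBe, hBm⟩ hdis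
    rw [hM1'def, ← hsplit]
    ext e
    simp only [Set.mem_union, Set.mem_insert_iff]
    tauto

end Aux


theorem stmt16 {V : Type*} [Fintype V] (G : SimpleGraph V) [DecidableRel G.Adj]
    (hcubic : ∀ v : V, G.degree v = 3) (M1 M2 : Set (Sym2 V))
    (hmax : MaxDisjointPair G M1 M2)
    (u : V) (l : Fin 3 → V) (hstar : IsK13Component G M1 M2 u l)
    (u1 u2 u3 u4 : V) (hP : IsP4Component G M1 M2 u1 u2 u3 u4) :
    ∀ i : Fin 3, s(l i, u2) ∉ M1 ∪ M2 ∧ s(l i, u3) ∉ M1 ∪ M2 := by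
  obtain ⟨hM1, hM2, hd, hmax⟩ := hmax
  obtain ⟨hinj, hlu, hadj, hnb, hleaf⟩ := hstar
  obtain ⟨h12n, h13n, h14n, h23n, h24n, h34n, h12, h23, h34, hw1, hw2, hw3, hw4⟩ := hP
  have huu2 : u ≠ u2 := by
    rintro rfl
    have h0 := hw2 (l 0) (hadj 0)
    have h1 := hw2 (l 1) (hadj 1)
    have h2 := hw2 (l 2) (hadj 2)
    rcases h0 with h0 | h0 <;> rcases h1 with h1 | h1 <;> rcases h2 with h2 | h2 <;>
      first
      | exact absurd (hinj (h0.trans h1.symm)) (by decide)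
      | exact absurd (hinj (h0.trans h2.symm)) (by decide)
      | exact absurd (hinj (h1.trans h2.symm)) (by decide)
  have huu3 : u ≠ u3 := by
    rintro rfl
    have h0 := hw3 (l 0) (hadj 0)
    have h1 := hw3 (l 1) (hadj 1)
    have h2 := hw3 (l 2) (hadj 2)
    rcases h0 with h0 | h0 <;> rcases h1 with h1 | h1 <;> rcases h2 with h2 | h2 <;>
      first
      | exact absurd (hinj (h0.trans h1.symm)) (by decide)
      | exact absurd (hinj (h0.trans h2.symm)) (by decide)
      | exact absurd (hinj (h1.trans h2.symm)) (by decide)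
  have hufree : ∀ e ∈ M1 ∪ M2, u ∉ e := by
    intro e he hue
    have heE : e ∈ G.edgeSet := by
      rcases he with h | h
      · exact hM1.1 h
      · exact hM2.1 h
    obtain ⟨w, rfl⟩ := Sym2.mem_iff_exists.mp hue
    have hadjw : G.Adj u w := (G.mem_edgeSet).mp heE
    have d01 : l 0 ≠ l 1 := fun h => absurd (hinj h) (by decide)
    have d02 : l 0 ≠ l 2 := fun h => absurd (hinj h) (by decide)
    have d12 : l 1 ≠ l 2 := fun h => absurd (hinj h) (by decide)
    rcases neighbors_eq G (hcubic u) d01 d02 d12 (hadj 0).1 (hadj 1).1 (hadj 2).1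
        w hadjw with rfl | rfl | rfl
    · exact (hadj 0).2 he
    · exact (hadj 1).2 he
    · exact (hadj 2).2 he
  intro i
  have hl1 : l i ≠ u1 := by
    intro h
    exact huu2 (hleaf i u2 (h ▸ h12)).symm
  have hl2 : l i ≠ u2 := by
    intro h
    have e1 : u1 = u := hleaf i u1 (h ▸ hatAdj_symm G h12)
    have e3 : u3 = u := hleaf i u3 (h ▸ h23)
    exact h13n (e1.trans e3.symm)
  have hl3 : l i ≠ u3 := by
    intro h
    have e2 : u2 = u := hleaf i u2 (h ▸ hatAdj_symm G h23)
    have e4 : u4 = u := hleaf i u4 (h ▸ h34)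
    exact h24n (e2.trans e4.symm)
  have hl4 : l i ≠ u4 := by
    intro h
    exact huu3 (hleaf i u3 (h ▸ hatAdj_symm G h34)).symm
  have hmax' : ∀ N1 N2 : Set (Sym2 V), IsMatchingSet G N1 → IsMatchingSet G N2 →
      Disjoint N1 N2 → (N1 ∪ N2).ncard ≤ (M2 ∪ M1).ncard := by
    intro N1 N2 a b c
    rw [Set.union_comm M2 M1]
    exact hmax N1 N2 a b c
  have hufree' : ∀ e ∈ M2 ∪ M1, u ∉ e := fun e he =>
    hufree e (by rwa [Set.union_comm] at he)
  constructor
  · rintro (h | h)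
    · exact key G hcubic M1 M2 hM1 hM2 hd hmax u (l i) u1 u2 u3 u4 (hadj i) hufree
        h12 h23 h34 hl1 hl3 h13n h24n huu2 huu3 h
    · exact key G hcubic M2 M1 hM2 hM1 hd.symm hmax' u (l i) u1 u2 u3 u4
        (hatAdj_comm G (hadj i)) hufree' (hatAdj_comm G h12) (hatAdj_comm G h23)
        (hatAdj_comm G h34) hl1 hl3 h13n h24n huu2 huu3 h
  · rintro (h | h)
    · exact key G hcubic M1 M2 hM1 hM2 hd hmax u (l i) u4 u3 u2 u1 (hadj i) hufree
        (hatAdj_symm G h34) (hatAdj_symm G h23) (hatAdj_symm G h12) hl4 hl2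
        h24n.symm h13n.symm huu3 huu2 h
    · exact key G hcubic M2 M1 hM2 hM1 hd.symm hmax' u (l i) u4 u3 u2 u1
        (hatAdj_comm G (hadj i)) hufree' (hatAdj_comm G (hatAdj_symm G h34))
        (hatAdj_comm G (hatAdj_symm G h23)) (hatAdj_comm G (hatAdj_symm G h12))
        hl4 hl2 h24n.symm h13n.symm huu3 huu2 h
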